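/- With notation as in the failure-probability bound: if t ≤ t_M where t_M is the largest integer with v* > μ(H,t_M) + μ(H,t_M−1), and the thresholds satisfy b_i ∈ [μ(H,t)+1, v_i − μ(H,t−1)] for all i, then N(γ̃^{(i)}, t−1, v_i − b_i) = 0 and N(γ̃^{(i)}, t, b_i − 1) = 0 for all i; consequently the single-iteration bit-flipping decoder succeeds on every weight-t error vector (P_f = 0). -/

import Mathlib

open Finset

/-- Support of column `i` of `H`. -/
def colSupp {r n : ℕ} (H : Matrix (Fin r) (Fin n) (ZMod 2)) (i : Fin n) : Finset (Fin r) :=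
  Finset.univ.filter (fun l => H l i = 1)

/-- Weight of column `i`. -/
def colWt {r n : ℕ} (H : Matrix (Fin r) (Fin n) (ZMod 2)) (i : Fin n) : ℕ :=
  (colSupp H i).card

/-- Syndrome `s = e Hᵀ`. -/
def synd {r n : ℕ} (H : Matrix (Fin r) (Fin n) (ZMod 2)) (e : Fin n → ZMod 2)
    (l : Fin r) : ZMod 2 :=
  ∑ j, e j * H l j

/-- Number of unsatisfied parity checks involving bit `i`. -/
def sigma {r n : ℕ} (H : Matrix (Fin r) (Fin n) (ZMod 2)) (e : Fin n → ZMod 2)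
    (i : Fin n) : ℕ :=
  ((colSupp H i).filter (fun l => synd H e l = 1)).card

/-- Hamming weight of a vector. -/
def wt {n : ℕ} (e : Fin n → ZMod 2) : ℕ :=
  (Finset.univ.filter (fun j => e j = 1)).card

/-- Adjacency matrix entry `γ_{i,j} = |supp(h_i) ∩ supp(h_j)|` for `i ≠ j`, `0` on diagonal. -/
def gam {r n : ℕ} (H : Matrix (Fin r) (Fin n) (ZMod 2)) (i j : Fin n) : ℕ :=
  if i = j then 0 else (colSupp H i ∩ colSupp H j).card

/-- `μ^{(i)}(z)`: the sum of the `z` largest entries of row `i` of `Γ` (excluding entry `i`),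
expressed as the maximum over size-`z` index sets of the corresponding sum. -/
def muI {r n : ℕ} (H : Matrix (Fin r) (Fin n) (ZMod 2)) (i : Fin n) (z : ℕ) : ℕ :=
  (Finset.powersetCard z (Finset.univ.erase i)).sup (fun M => ∑ j ∈ M, gam H i j)

/-- Maximum column union of order `z`. -/
def mu {r n : ℕ} (H : Matrix (Fin r) (Fin n) (ZMod 2)) (z : ℕ) : ℕ :=
  Finset.univ.sup (fun i => muI H i z)

/-- `N(γ̃^{(i)}, m, α)`: the number of size-`m` sets `P` of indices `≠ i` with
`Σ_{j∈P} γ_{i,j} > α`. -/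
def Ntil {r n : ℕ} (H : Matrix (Fin r) (Fin n) (ZMod 2)) (i : Fin n) (m α : ℕ) : ℕ :=
  ((Finset.powersetCard m (Finset.univ.erase i)).filter
    (fun P => α < ∑ j ∈ P, gam H i j)).card

lemma zmod2_cases (x : ZMod 2) : x = 0 ∨ x = 1 := by revert x; decide

lemma sum_le_muI {r n : ℕ} (H : Matrix (Fin r) (Fin n) (ZMod 2)) (i : Fin n)
    (P : Finset (Fin n)) (m : ℕ) (hP : P ⊆ Finset.univ.erase i) (hc : P.card = m) :
    ∑ j ∈ P, gam H i j ≤ muI H i m := by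
  unfold muI
  exact Finset.le_sup (f := fun M => ∑ j ∈ M, gam H i j) (Finset.mem_powersetCard.2 ⟨hP, hc⟩)

lemma muI_le_mu {r n : ℕ} (H : Matrix (Fin r) (Fin n) (ZMod 2)) (i : Fin n) (m : ℕ) :
    muI H i m ≤ mu H m := by
  unfold mu
  exact Finset.le_sup (f := fun i => muI H i m) (Finset.mem_univ i)

lemma synd_eq {r n : ℕ} (H : Matrix (Fin r) (Fin n) (ZMod 2)) (e : Fin n → ZMod 2)
    (l : Fin r) :
    synd H e l = ∑ j ∈ Finset.univ.filter (fun j => e j = 1), H l j := by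
  unfold synd
  rw [Finset.sum_filter]
  refine Finset.sum_congr rfl fun j _ => ?_
  rcases zmod2_cases (e j) with h | h <;> simp [h]

theorem stmt11 {r n : ℕ} (H : Matrix (Fin r) (Fin n) (ZMod 2)) (vstar t tM : ℕ)
    (hcol : ∀ i, vstar ≤ colWt H i)
    (htM : mu H tM + mu H (tM - 1) < vstar)
    (htMmax : ∀ t', mu H t' + mu H (t' - 1) < vstar → t' ≤ tM)
    (ht : t ≤ tM)
    (b : Fin n → ℕ)
    (hb : ∀ i, mu H t + 1 ≤ b i ∧ b i ≤ colWt H i - mu H (t - 1)) :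
    (∀ i, Ntil H i (t - 1) (colWt H i - b i) = 0 ∧ Ntil H i t (b i - 1) = 0) ∧
    (∀ e : Fin n → ZMod 2, wt e = t →
      (∀ i, e i = 1 → b i ≤ sigma H e i) ∧ (∀ i, e i = 0 → sigma H e i < b i)) := by
  have hkey : ∀ i, mu H (t - 1) + b i ≤ colWt H i := by
    intro i
    obtain ⟨h1, h2⟩ := hb i
    omega
  constructor
  · intro i
    obtain ⟨h1, h2⟩ := hb i
    constructor
    · rw [Ntil, Finset.card_eq_zero, Finset.filter_eq_empty_iff]
      intro P hP
      rw [Finset.mem_powersetCard] at hP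
      have hle : ∑ j ∈ P, gam H i j ≤ mu H (t - 1) :=
        (sum_le_muI H i P (t - 1) hP.1 hP.2).trans (muI_le_mu H i (t - 1))
      have := hkey i
      omega
    · rw [Ntil, Finset.card_eq_zero, Finset.filter_eq_empty_iff]
      intro P hP
      rw [Finset.mem_powersetCard] at hP
      have hle : ∑ j ∈ P, gam H i j ≤ mu H t :=
        (sum_le_muI H i P t hP.1 hP.2).trans (muI_le_mu H i t)
      omega
  · intro e hwt
    set S : Finset (Fin n) := Finset.univ.filter (fun j => e j = 1) with hS
    have hcardS : S.card = t := hwt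
    constructor
    · -- e i = 1
      intro i hei
      have hiS : i ∈ S := by simp [hS, hei]
      classical
      set B : Finset (Fin r) :=
        (colSupp H i).filter (fun l => ∃ j ∈ S.erase i, H l j = 1) with hB
      have hBsub : B ⊆ (S.erase i).biUnion (fun j => colSupp H i ∩ colSupp H j) := by
        intro l hl
        rw [hB, Finset.mem_filter] at hl
        obtain ⟨j, hj, hjl⟩ := hl.2
        exact Finset.mem_biUnion.2 ⟨j, hj, Finset.mem_inter.2
          ⟨hl.1, by simp [colSupp, hjl]⟩⟩
      have hBcard : B.card ≤ mu H (t - 1) := by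
        calc B.card ≤ ∑ j ∈ S.erase i, (colSupp H i ∩ colSupp H j).card :=
              (Finset.card_le_card hBsub).trans (Finset.card_biUnion_le)
          _ = ∑ j ∈ S.erase i, gam H i j := by
              refine Finset.sum_congr rfl fun j hj => ?_
              have : i ≠ j := fun h => (Finset.mem_erase.1 hj).1 h.symm
              simp [gam, this]
          _ ≤ muI H i (t - 1) := by
              refine sum_le_muI H i _ _ (fun j hj => ?_) ?_
              · exact Finset.mem_erase.2 ⟨(Finset.mem_erase.1 hj).1, Finset.mem_univ j⟩
              · rw [Finset.card_erase_of_mem hiS, hcardS]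
          _ ≤ mu H (t - 1) := muI_le_mu H i (t - 1)
      have hsub : colSupp H i \ B ⊆ (colSupp H i).filter (fun l => synd H e l = 1) := by
        intro l hl
        rw [Finset.mem_sdiff] at hl
        obtain ⟨hl1, hl2⟩ := hl
        refine Finset.mem_filter.2 ⟨hl1, ?_⟩
        have hall : ∀ j ∈ S.erase i, H l j = 0 := by
          intro j hj
          rcases zmod2_cases (H l j) with h | h
          · exact h
          · exact absurd (Finset.mem_filter.2 ⟨hl1, ⟨j, hj, h⟩⟩) hl2
        have hli : H l i = 1 := by
          have h := hl1
          simp only [colSupp, Finset.mem_filter] at h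
          exact h.2
        rw [synd_eq, ← hS, ← Finset.add_sum_erase S _ hiS,
          Finset.sum_eq_zero hall, hli, add_zero]
      have hge : colWt H i - B.card ≤ sigma H e i := by
        have h1 : (colSupp H i \ B).card = colWt H i - B.card := by
          rw [Finset.card_sdiff_of_subset (Finset.filter_subset _ _)]
          rfl
        calc colWt H i - B.card = (colSupp H i \ B).card := h1.symm
          _ ≤ _ := Finset.card_le_card hsub
      have := hkey i
      unfold sigma at *
      omega
    · -- e i = 0
      intro i hei
      have hiS : i ∉ S := by simp [hS, hei]
      have hsub : (colSupp H i).filter (fun l => synd H e l = 1) ⊆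
          S.biUnion (fun j => colSupp H i ∩ colSupp H j) := by
        intro l hl
        rw [Finset.mem_filter] at hl
        obtain ⟨hl1, hl2⟩ := hl
        rw [synd_eq, ← hS] at hl2
        by_contra hcon
        have hall : ∀ j ∈ S, H l j = 0 := by
          intro j hj
          rcases zmod2_cases (H l j) with h | h
          · exact h
          · exact absurd (Finset.mem_biUnion.2 ⟨j, hj, Finset.mem_inter.2
              ⟨hl1, by simp [colSupp, h]⟩⟩) hcon
        rw [Finset.sum_eq_zero hall] at hl2
        exact absurd hl2 (by decide)
      have hle : sigma H e i ≤ mu H t := by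
        calc sigma H e i ≤ ∑ j ∈ S, (colSupp H i ∩ colSupp H j).card :=
              (Finset.card_le_card hsub).trans (Finset.card_biUnion_le)
          _ = ∑ j ∈ S, gam H i j := by
              refine Finset.sum_congr rfl fun j hj => ?_
              have : i ≠ j := fun h => hiS (h ▸ hj)
              simp [gam, this]
          _ ≤ muI H i t := sum_le_muI H i S t
              (fun j hj => Finset.mem_erase.2 ⟨fun h => hiS (h ▸ hj), Finset.mem_univ j⟩)
              hcardS
          _ ≤ mu H t := muI_le_mu H i t
      obtain ⟨h1, _⟩ := hb i
      omega
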